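/- arXiv:2602.21674 — 3 statements merged into one kernel-verified Lean document; each statement's English description precedes it below -/
import Mathlib

section
/- Let H be an e-persistent Mealy machine and T a test suite that is complete for H with respect to a fault domain C. Then the e-persistent test suite T_e, obtained by truncating each word σ ∈ T at position firstError(H,σ)+1 when the output of H on σ first becomes e at position firstError(H,σ)+1 (and leaving σ unchanged otherwise), is complete for H with respect to the subdomain C_e of e-persistent machines in C. That is, for every e-persistent M ∈ C, if H and M produce equal outputs on every word of T_e, then H and M are equivalent. -/
structure Mealy (I O : Type) where
  Q : Type
  q0 : Q
  trans : Q → I → Q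
  out1 : Q → I → O

namespace Mealy

variable {I O : Type}

def run (M : Mealy I O) : M.Q → List I → M.Q
  | q, [] => q
  | q, i :: σ => M.run (M.trans q i) σ

def out (M : Mealy I O) : M.Q → List I → List O
  | _, [] => []
  | q, i :: σ => M.out1 q i :: M.out (M.trans q i) σ

/-- `M` is `e`-persistent: once the output word ends in `e`, appending any
input keeps the last output equal to `e`. -/
def EPersistent (M : Mealy I O) (e : O) : Prop :=
  ∀ (σ : List I) (i : I),
    (M.out M.q0 σ).getLast? = some e →
    (M.out M.q0 (σ ++ [i])).getLast? = some e

theorem length_out (M : Mealy I O) (q : M.Q) (σ : List I) :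
    (M.out q σ).length = σ.length := by
  induction σ generalizing q with
  | nil => rfl
  | cons i σ ih => simp [out, ih]

theorem out_take (M : Mealy I O) (q : M.Q) (σ : List I) (n : ℕ) :
    M.out q (σ.take n) = (M.out q σ).take n := by
  induction σ generalizing q n with
  | nil => simp [out]
  | cons i σ ih =>
    cases n with
    | zero => simp [out]
    | succ n => simp [out, ih]

theorem epersistent_append {M : Mealy I O} {e : O} (hM : M.EPersistent e)
    (τ : List I) (h : (M.out M.q0 τ).getLast? = some e) (ρ : List I) :
    (M.out M.q0 (τ ++ ρ)).getLast? = some e := by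
  induction ρ using List.reverseRecOn with
  | nil => simpa using h
  | append_singleton ρ i ih =>
    rw [← List.append_assoc]
    exact hM _ _ ih

end Mealy

theorem getLast?_take_succ {α : Type} (l : List α) (k : ℕ) (hk : k < l.length) :
    (l.take (k + 1)).getLast? = l[k]? := by
  rw [List.getLast?_eq_getElem?, List.length_take]
  have : min (k + 1) l.length - 1 = k := by omega
  rw [this]
  rw [List.getElem?_take]
  simp

/-- `i` is the position of the first error of `H` on `σ`: the `i`-th output
symbol is not `e`, the `(i+1)`-th is `e`, and no earlier index has this
property. -/
def FirstError {I O : Type} (H : Mealy I O) (e : O) (σ : List I) (i : ℕ) : Prop :=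
  (H.out H.q0 σ)[i]? ≠ some e ∧ (H.out H.q0 σ)[i + 1]? = some e ∧
    ∀ j < i, ¬ ((H.out H.q0 σ)[j]? ≠ some e ∧ (H.out H.q0 σ)[j + 1]? = some e)

/-- The `e`-persistent test suite: each word of `T` is truncated to its first
`i+2` symbols when the output of `H` first becomes `e` at position `i+1`, and
left unchanged otherwise. -/
def feSet {I O : Type} (H : Mealy I O) (e : O) (T : Set (List I)) : Set (List I) :=
  { τ | ∃ σ ∈ T,
      (∃ i : ℕ, FirstError H e σ i ∧ τ = σ.take (i + 2)) ∨
      ((¬ ∃ i : ℕ, FirstError H e σ i) ∧ τ = σ) }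

/-- `T` is a complete test suite for `H` w.r.t. the fault domain `C`. -/
def TestComplete {I O : Type} (H : Mealy I O) (T : Set (List I))
    (C : Set (Mealy I O)) : Prop :=
  ∀ M ∈ C, (∀ σ ∈ T, H.out H.q0 σ = M.out M.q0 σ) →
    ∀ σ : List I, H.out H.q0 σ = M.out M.q0 σ

/-- If `H` is `e`-persistent and `T` is complete for `H` w.r.t. `C`, then the
`e`-persistent test suite `T_e` is complete for `H` w.r.t. the subdomain of
`e`-persistent machines in `C`. -/
theorem stmt2 {I O : Type} (H : Mealy I O) (e : O)
    (T : Set (List I)) (C : Set (Mealy I O))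
    (hH : H.EPersistent e)
    (hT : TestComplete H T C) :
    TestComplete H (feSet H e T) {M | M ∈ C ∧ M.EPersistent e} := by
  rintro M ⟨hMC, hMe⟩ hagree
  apply hT M hMC
  intro σ hσ
  by_cases hfe : ∃ i, FirstError H e σ i
  · obtain ⟨i, hi⟩ := hfe
    set τ := σ.take (i + 2) with hτdef
    have hτmem : τ ∈ feSet H e T := ⟨σ, hσ, Or.inl ⟨i, hi, rfl⟩⟩
    have hτ : H.out H.q0 τ = M.out M.q0 τ := hagree τ hτmem
    have hget : (H.out H.q0 σ)[i+1]? = some e := by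
      exact hi.2.1
    have hlen : i + 2 ≤ σ.length := by
      have h1 := (List.getElem?_eq_some_iff.mp hget).1
      rw [Mealy.length_out] at h1; omega
    -- the output of H on τ ends in e
    have hHτ : (H.out H.q0 τ).getLast? = some e := by
      rw [hτdef, Mealy.out_take,
        getLast?_take_succ (H.out H.q0 σ) (i+1) (by rw [Mealy.length_out]; omega)]
      exact hget
    have hMτ : (M.out M.q0 τ).getLast? = some e := hτ ▸ hHτ
    -- prove agreement on σ pointwise
    apply List.ext_getElem?
    intro k
    by_cases hkσ : k < σ.length
    · by_cases hk : k < i + 2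
      · rw [show (H.out H.q0 σ)[k]? = (H.out H.q0 τ)[k]? by
          rw [hτdef, Mealy.out_take, List.getElem?_take]; simp [hk]]
        rw [show (M.out M.q0 σ)[k]? = (M.out M.q0 τ)[k]? by
          rw [hτdef, Mealy.out_take, List.getElem?_take]; simp [hk]]
        rw [hτ]
      · -- k ≥ i + 2 : both outputs are e by persistence
        have hsplit : σ.take (k + 1) = τ ++ (σ.drop (i + 2)).take (k + 1 - (i + 2)) := by
          rw [hτdef, ← List.take_add]
          congr 1; omega
        have key : ∀ (N : Mealy I O), N.EPersistent e →
            (N.out N.q0 τ).getLast? = some e → (N.out N.q0 σ)[k]? = some e := by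
          intro N hN hNτ
          have := Mealy.epersistent_append hN τ hNτ ((σ.drop (i + 2)).take (k + 1 - (i + 2)))
          rw [← hsplit, Mealy.out_take,
            getLast?_take_succ (N.out N.q0 σ) k (by rw [Mealy.length_out]; omega)] at this
          exact this
        rw [key H hH hHτ, key M hMe hMτ]
    · rw [List.getElem?_eq_none (by rw [Mealy.length_out]; omega),
        List.getElem?_eq_none (by rw [Mealy.length_out]; omega)]
  · exact hagree σ ⟨σ, hσ, Or.inr ⟨hfe, rfl⟩⟩
end

section
/- C-apartness with respect to a complete reference refines ordinary apartness: if T is an observation tree for Mealy machine M, L is complete for M (every word producing an e-ending output in M lies outside L), and tree states p, q are C-apart with respect to L, then m(p) and m(q) are inequivalent states of M. -/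
structure PMealy (I O : Type) where
  Q : Type
  q0 : Q
  trans : Q → I → Option Q
  out1 : Q → I → Option O

namespace PMealy

variable {I O : Type}

def pout (M : PMealy I O) : M.Q → List I → Option (List O)
  | _, [] => some []
  | q, i :: σ =>
    match M.out1 q i, M.trans q i with
    | some o, some q' => (M.pout q' σ).map (o :: ·)
    | _, _ => none

def prun (M : PMealy I O) : M.Q → List I → Option M.Q
  | q, [] => some q
  | q, i :: σ =>
    match M.trans q i with
    | some q' => M.prun q' σ
    | none => none

/-- States `p` and `q` are apart: some input word on which both outputs are
defined produces different output words. -/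
def Apart (M : PMealy I O) (p q : M.Q) : Prop :=
  ∃ (σ : List I) (a b : List O),
    M.pout p σ = some a ∧ M.pout q σ = some b ∧ a ≠ b

end PMealy

/-- Tree states `p, q` are `C`-apart w.r.t. the reference `L`: there is a
word `σ` on which the defined tree outputs differ, or the output from one
state is defined with last symbol `e` while the access word of the other
state extended by `σ` lies in `L`. -/
def CApart {I O : Type} (T : PMealy I O) (e : O) (L : Set (List I))
    (acc : T.Q → List I) (p q : T.Q) : Prop :=
  ∃ σ : List I,
    (∃ a b : List O, T.pout p σ = some a ∧ T.pout q σ = some b ∧ a ≠ b) ∨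
    (∃ a : List O, T.pout p σ = some a ∧ a.getLast? = some e ∧ acc q ++ σ ∈ L) ∨
    (∃ b : List O, T.pout q σ = some b ∧ b.getLast? = some e ∧ acc p ++ σ ∈ L)

lemma out_append {I O : Type} (M : Mealy I O) :
    ∀ (σ τ : List I) (s : M.Q),
      M.out s (σ ++ τ) = M.out s σ ++ M.out (M.run s σ) τ := by
  intro σ
  induction σ with
  | nil => intro τ s; rfl
  | cons i σ ih => intro τ s; simp [Mealy.out, Mealy.run, ih]

lemma aux_pout {I O : Type} (M : Mealy I O) (T : PMealy I O) (m : T.Q → M.Q)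
    (hobs : ∀ (q : T.Q) (i : I) (q' : T.Q), T.trans q i = some q' →
      M.trans (m q) i = m q' ∧ T.out1 q i = some (M.out1 (m q) i)) :
    ∀ (σ : List I) (r : T.Q) (a : List O),
      T.pout r σ = some a → a = M.out (m r) σ := by
  intro σ
  induction σ with
  | nil => intro r a h; simp [PMealy.pout] at h; simp [Mealy.out, h.symm]
  | cons i σ ih =>
    intro r a h
    simp only [PMealy.pout] at h
    cases ho : T.out1 r i with
    | none => rw [ho] at h; simp at h
    | some o =>
      cases ht : T.trans r i with
      | none => rw [ho, ht] at h; simp at h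
      | some r' =>
        rw [ho, ht] at h
        simp only [Option.map_eq_some_iff] at h
        obtain ⟨b, hb, rfl⟩ := h
        obtain ⟨h1, h2⟩ := hobs r i r' ht
        rw [ho] at h2
        simp only [Mealy.out, h1]
        rw [ih r' b hb]
        simp at h2
        rw [h2]

lemma aux_prun {I O : Type} (M : Mealy I O) (T : PMealy I O) (m : T.Q → M.Q)
    (hobs : ∀ (q : T.Q) (i : I) (q' : T.Q), T.trans q i = some q' →
      M.trans (m q) i = m q' ∧ T.out1 q i = some (M.out1 (m q) i)) :
    ∀ (σ : List I) (r r' : T.Q),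
      T.prun r σ = some r' → M.run (m r) σ = m r' := by
  intro σ
  induction σ with
  | nil => intro r r' h; simp [PMealy.prun] at h; simp [Mealy.run, h]
  | cons i σ ih =>
    intro r r' h
    simp only [PMealy.prun] at h
    cases ht : T.trans r i with
    | none => rw [ht] at h; simp at h
    | some s =>
      rw [ht] at h
      obtain ⟨h1, _⟩ := hobs r i s ht
      simp only [Mealy.run, h1]
      exact ih s r' h

/-- If `T` is an observation tree for `M`, `L` is complete for `M` (every
word producing an `e`-ending output lies outside `L`), and tree states
`p, q` are `C`-apart w.r.t. `L`, then `m p` and `m q` are inequivalent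
states of `M`. -/
theorem stmt9 {I O : Type} (M : Mealy I O) (e : O) (T : PMealy I O)
    (m : T.Q → M.Q) (acc : T.Q → List I)
    (hroot : m T.q0 = M.q0)
    (hobs : ∀ (q : T.Q) (i : I) (q' : T.Q), T.trans q i = some q' →
      M.trans (m q) i = m q' ∧ T.out1 q i = some (M.out1 (m q) i))
    (hacc : ∀ q : T.Q, T.prun T.q0 (acc q) = some q)
    (L : Set (List I))
    (hcomplete : ∀ σ : List I, (M.out M.q0 σ).getLast? = some e → σ ∉ L)
    (p q : T.Q) (hap : CApart T e L acc p q) :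
    ∃ σ : List I, M.out (m p) σ ≠ M.out (m q) σ := by
  obtain ⟨σ, h | h | h⟩ := hap
  · obtain ⟨a, b, ha, hb, hab⟩ := h
    exact ⟨σ, by rw [← aux_pout M T m hobs σ p a ha, ← aux_pout M T m hobs σ q b hb]; exact hab⟩
  · obtain ⟨a, ha, hlast, hmem⟩ := h
    refine ⟨σ, fun heq => ?_⟩
    have hq := aux_prun M T m hobs (acc q) T.q0 q (hacc q)
    rw [hroot] at hq
    have : (M.out M.q0 (acc q ++ σ)).getLast? = some e := by
      rw [out_append M (acc q) σ M.q0, hq, ← heq, ← aux_pout M T m hobs σ p a ha]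
      rw [List.getLast?_append_of_ne_nil]
      · exact hlast
      · intro hnil; rw [hnil] at hlast; simp at hlast
    exact hcomplete _ this hmem
  · obtain ⟨b, hb, hlast, hmem⟩ := h
    refine ⟨σ, fun heq => ?_⟩
    have hp := aux_prun M T m hobs (acc p) T.q0 p (hacc p)
    rw [hroot] at hp
    have : (M.out M.q0 (acc p ++ σ)).getLast? = some e := by
      rw [out_append M (acc p) σ M.q0, hp, heq, ← aux_pout M T m hobs σ q b hb]
      rw [List.getLast?_append_of_ne_nil]
      · exact hlast
      · intro hnil; rw [hnil] at hlast; simp at hlast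
    exact hcomplete _ this hmem
end

section
/- If L is a sound and complete reference for an e-persistent Mealy machine M, and A ⊆ I* contains for every reachable accepting state of the minimal DFA R of L some word reaching it from the initial state, then the words of A reach exactly |R_acc| pairwise-inequivalent states of M, where |R_acc| is the number of distinct reachable accepting states of R; in particular M has at least |R_acc| states. -/
namespace Mealy
variable {I O : Type}

theorem out_append (M : Mealy I O) (q : M.Q) (a w : List I) :
    M.out q (a ++ w) = M.out q a ++ M.out (M.run q a) w := by
  induction a generalizing q with
  | nil => rfl
  | cons i a ih => simp [Mealy.out, Mealy.run, ih]

theorem out_length (M : Mealy I O) (q : M.Q) (a : List I) :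
    (M.out q a).length = a.length := by
  induction a generalizing q with
  | nil => rfl
  | cons i a ih => simp [Mealy.out, ih]

end Mealy

/-- If `L` is sound and complete for `M` and `A` contains, for every
reachable accepting state of the minimal DFA `R` of `L`, a word reaching it,
then the words of `A` reach, for the reachable accepting states of `R`,
pairwise-inequivalent states of `M`; in particular `M` has at least as many
states as `R` has reachable accepting states. -/
theorem stmt11 {I O Qr : Type} (M : Mealy I O) (e : O) (R : DFA I Qr)
    (L : Set (List I))
    (hL : ∀ σ : List I, σ ∈ L ↔ R.eval σ ∈ R.accept)
    (hsound : ∀ σ ∉ L, (M.out M.q0 σ).getLast? = some e)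
    (hcomplete : ∀ σ : List I, (M.out M.q0 σ).getLast? = some e → σ ∉ L)
    (hRmin : ∀ p q : Qr, p ≠ q →
      ∃ w : List I, (R.evalFrom p w ∈ R.accept ↔ R.evalFrom q w ∉ R.accept))
    (A : Set (List I))
    (hAcov : ∀ s : Qr, s ∈ R.accept → (∃ w : List I, R.eval w = s) →
      ∃ a ∈ A, R.eval a = s) :
    ∃ f : {s : Qr // s ∈ R.accept ∧ ∃ w : List I, R.eval w = s} → M.Q,
      (∀ s, ∃ a ∈ A, R.eval a = s.1 ∧ M.run M.q0 a = f s) ∧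
      (∀ s t, s ≠ t → ∃ σ : List I, M.out (f s) σ ≠ M.out (f t) σ) ∧
      Function.Injective f := by
  classical
  have key : ∀ σ : List I, σ ∈ L ↔ (M.out M.q0 σ).getLast? ≠ some e := by
    intro σ
    constructor
    · intro h he; exact hcomplete σ he h
    · intro h; by_contra hn; exact h (hsound σ hn)
  set S := {s : Qr // s ∈ R.accept ∧ ∃ w : List I, R.eval w = s} with hS
  have choice : ∀ s : S, ∃ a ∈ A, R.eval a = s.1 := fun s =>
    hAcov s.1 s.2.1 s.2.2
  choose a ha hR using choice
  have main : ∀ s t : S, s ≠ t → ∃ σ : List I,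
      M.out (M.run M.q0 (a s)) σ ≠ M.out (M.run M.q0 (a t)) σ := by
    intro s t hst
    obtain ⟨w, hw⟩ := hRmin s.1 t.1 (fun h => hst (Subtype.ext h))
    have hwne : w ≠ [] := by
      rintro rfl
      simp only [DFA.evalFrom_nil] at hw
      exact (hw.mp s.2.1) t.2.1
    refine ⟨w, fun heq => ?_⟩
    have hOsome : ∀ q : M.Q, (M.out q w).getLast?.isSome := by
      intro q
      rw [List.getLast?_isSome]
      intro hnil
      exact hwne (by simpa [M.out_length] using congrArg List.length hnil)
    have e1 : ∀ u : List I, (M.out M.q0 (u ++ w)).getLast? =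
        (M.out (M.run M.q0 u) w).getLast? := by
      intro u
      rw [M.out_append, List.getLast?_append, Option.or_of_isSome (hOsome _)]
    have hev : ∀ u : List I, R.eval (u ++ w) = R.evalFrom (R.eval u) w := by
      intro u
      exact R.evalFrom_of_append R.start u w
    have hLs : (a s ++ w ∈ L) ↔ (a t ++ w ∈ L) := by
      rw [key, key, e1, e1, heq]
    rw [hL, hL, hev, hev, hR s, hR t] at hLs
    tauto
  refine ⟨fun s => M.run M.q0 (a s), fun s => ⟨a s, ha s, hR s, rfl⟩, main, ?_⟩
  intro s t hft
  by_contra hst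
  obtain ⟨σ, hσ⟩ := main s t hst
  have hft' : M.run M.q0 (a s) = M.run M.q0 (a t) := hft
  rw [hft'] at hσ
  exact hσ rfl
end
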